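/- Let 0 < α < 1, b > 0, J = [0,b]. Let ψ : J → ℝ be increasing and continuously differentiable with ψ'(z) > 0 for all z ∈ J. Let F : J × ℝ × ℝ → ℝ and H : J × J × ℝ → ℝ be continuous, let ϑ₀ ∈ ℝ, and let ϑ : J → ℝ be continuously differentiable. Then ϑ satisfies N^{α,ψ}ϑ(z) = F(z, ϑ(z), (1/Γ(α)) ∫₀^z ψ'(τ)(ψ(z) − ψ(τ))^{α−1} H(z, τ, N^{α,ψ}ϑ(τ)) dτ) for all z ∈ J together with ϑ(0) = ϑ₀, if and only if ϑ satisfies the integral equation ϑ(z) = ϑ₀ + (1/Γ(α)) ∫₀^z ψ'(κ)(ψ(z) − ψ(κ))^{α−1} F(κ, ϑ(κ), (1/Γ(α)) ∫₀^κ ψ'(τ)(ψ(κ) − ψ(τ))^{α−1} H(κ, τ, N^{α,ψ}ϑ(τ)) dτ) dκ for all z ∈ J. -/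

import Mathlib

open MeasureTheory Set

/-- ψ-Riemann–Liouville fractional integral of order `α` of `f` with respect to `ψ`
(with `ψ'` a given derivative function of `ψ`):
`I^{α,ψ} f (z) = (1/Γ(α)) ∫₀^z ψ'(κ) (ψ(z) - ψ(κ))^(α-1) f(κ) dκ`. -/
noncomputable def psiInt (α : ℝ) (ψ ψ' f : ℝ → ℝ) (z : ℝ) : ℝ :=
  (1 / Real.Gamma α) * ∫ κ in (0:ℝ)..z, ψ' κ * (ψ z - ψ κ) ^ (α - 1) * f κ

/-- ψ-Caputo fractional derivative of order `α` (for `0 < α < 1`) of a function with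
derivative `v'`, with respect to `ψ` (with derivative `ψ'`):
`N^{α,ψ} v (z) = (1/Γ(1-α)) ∫₀^z ψ'(κ) (ψ(z) - ψ(κ))^(-α) (v'(κ)/ψ'(κ)) dκ`. -/
noncomputable def psiCaputo (α : ℝ) (ψ ψ' v' : ℝ → ℝ) (z : ℝ) : ℝ :=
  (1 / Real.Gamma (1 - α)) * ∫ κ in (0:ℝ)..z, ψ' κ * (ψ z - ψ κ) ^ (-α) * (v' κ / ψ' κ)

/-- Mittag-Leffler function `E_α(x) = ∑_{m=0}^∞ x^m / Γ(α m + 1)`. -/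
noncomputable def mittagLeffler (α x : ℝ) : ℝ :=
  ∑' m : ℕ, x ^ m / Real.Gamma (α * m + 1)


section FracAux

open intervalIntegral

variable {b : ℝ} {ψ ψ' : ℝ → ℝ}

lemma psi_image_Ioo
    (hψ_mono : StrictMonoOn ψ (Set.Icc 0 b))
    (hψ_deriv : ∀ z ∈ Set.Icc 0 b, HasDerivWithinAt ψ (ψ' z) (Set.Icc 0 b) z)
    {s t : ℝ} (hs : 0 ≤ s) (hst : s < t) (htb : t ≤ b) :
    ψ '' Set.Ioo s t = Set.Ioo (ψ s) (ψ t) := by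
  have hsb : s ∈ Set.Icc 0 b := ⟨hs, hst.le.trans htb⟩
  have htb' : t ∈ Set.Icc 0 b := ⟨hs.trans hst.le, htb⟩
  have hsub : Set.Icc s t ⊆ Set.Icc 0 b := Set.Icc_subset_Icc hs htb
  have hcont : ContinuousOn ψ (Set.Icc s t) := fun x hx =>
    ((hψ_deriv x (hsub hx)).continuousWithinAt).mono hsub
  apply Set.Subset.antisymm
  · rintro _ ⟨x, hx, rfl⟩
    exact ⟨hψ_mono hsb (hsub ⟨hx.1.le, hx.2.le⟩) hx.1,
      hψ_mono (hsub ⟨hx.1.le, hx.2.le⟩) htb' hx.2⟩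
  · exact intermediate_value_Ioo hst.le hcont

lemma integral_comp_psi
    (hψ_mono : StrictMonoOn ψ (Set.Icc 0 b))
    (hψ_deriv : ∀ z ∈ Set.Icc 0 b, HasDerivWithinAt ψ (ψ' z) (Set.Icc 0 b) z)
    (hψ'_pos : ∀ z ∈ Set.Icc 0 b, 0 < ψ' z)
    {s t : ℝ} (hs : 0 ≤ s) (hst : s ≤ t) (htb : t ≤ b) (G : ℝ → ℝ) :
    ∫ κ in s..t, ψ' κ * G (ψ κ) = ∫ u in ψ s..ψ t, G u := by
  rcases eq_or_lt_of_le hst with rfl | hlt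
  · simp
  have hsb : s ∈ Set.Icc 0 b := ⟨hs, hlt.le.trans htb⟩
  have htb' : t ∈ Set.Icc 0 b := ⟨hs.trans hlt.le, htb⟩
  have hψst : ψ s ≤ ψ t := (hψ_mono hsb htb' hlt).le
  have hsub : Set.Ioo s t ⊆ Set.Icc 0 b := fun x hx => ⟨hs.trans hx.1.le, hx.2.le.trans htb⟩
  have hderiv : ∀ x ∈ Set.Ioo s t, HasDerivWithinAt ψ (ψ' x) (Set.Ioo s t) x := fun x hx =>
    (hψ_deriv x (hsub hx)).mono hsub
  have hinj : Set.InjOn ψ (Set.Ioo s t) := (hψ_mono.injOn).mono hsub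
  have key := integral_image_eq_integral_abs_deriv_smul measurableSet_Ioo hderiv hinj G
  rw [psi_image_Ioo hψ_mono hψ_deriv hs hlt htb] at key
  rw [intervalIntegral.integral_of_le hst, intervalIntegral.integral_of_le hψst,
    integral_Ioc_eq_integral_Ioo, integral_Ioc_eq_integral_Ioo, key]
  apply setIntegral_congr_fun measurableSet_Ioo
  intro x hx
  dsimp only
  rw [abs_of_pos (hψ'_pos x (hsub hx)), smul_eq_mul]

lemma integral_rpow_kernel {β c e Y : ℝ} (hβ : 0 < β) :
    ∫ u in c..e, (Y - u) ^ (β - 1) = ((Y - c) ^ β - (Y - e) ^ β) / β := by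
  rw [intervalIntegral.integral_comp_sub_left (fun x : ℝ => x ^ (β - 1)) Y,
    integral_rpow (Or.inl (by linarith))]
  rw [sub_add_cancel]



lemma beta01 {α : ℝ} (hα0 : 0 < α) (hα1 : α < 1) :
    ∫ x in (0:ℝ)..1, x ^ (-α) * (1 - x) ^ (α - 1) = Real.Gamma (1 - α) * Real.Gamma α := by
  have hs : 0 < Complex.re ((1 - α : ℝ) : ℂ) := by simp; linarith
  have ht : 0 < Complex.re ((α : ℝ) : ℂ) := by simpa using hα0
  have h := Complex.Gamma_mul_Gamma_eq_betaIntegral hs ht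
  have hsum : ((1 - α : ℝ) : ℂ) + ((α : ℝ) : ℂ) = 1 := by push_cast; ring
  rw [hsum, Complex.Gamma_one, one_mul] at h
  have hbeta : Complex.betaIntegral ((1 - α : ℝ) : ℂ) ((α : ℝ) : ℂ) =
      ((∫ x in (0:ℝ)..1, x ^ (-α) * (1 - x) ^ (α - 1) : ℝ) : ℂ) := by
    rw [Complex.betaIntegral, ← intervalIntegral.integral_ofReal]
    apply intervalIntegral.integral_congr
    intro x hx
    rw [Set.uIcc_of_le (by norm_num : (0:ℝ) ≤ 1)] at hx
    have hx0 : (0:ℝ) ≤ x := hx.1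
    have hx1 : (0:ℝ) ≤ 1 - x := by linarith [hx.2]
    dsimp only
    rw [Complex.ofReal_mul, Complex.ofReal_cpow hx0, Complex.ofReal_cpow hx1]
    push_cast
    ring_nf
  rw [hbeta, Complex.Gamma_ofReal, Complex.Gamma_ofReal] at h
  exact_mod_cast h.symm

lemma beta_kernel_integral {α c d : ℝ} (hα0 : 0 < α) (hα1 : α < 1) (hcd : c < d) :
    ∫ u in c..d, (d - u) ^ (α - 1) * (u - c) ^ (-α) = Real.Gamma α * Real.Gamma (1 - α) := by
  set k := d - c with hk
  have hk0 : 0 < k := by simp [hk]; linarith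
  have comp := intervalIntegral.integral_comp_mul_add
    (a := (0:ℝ)) (b := 1) (f := fun u => (d - u) ^ (α - 1) * (u - c) ^ (-α)) (ne_of_gt hk0) c
  have he : k * 1 + c = d := by simp [hk]
  have he0 : k * 0 + c = c := by ring
  rw [he, he0] at comp
  have hcongr : (∫ x in (0:ℝ)..1, (fun u => (d - u) ^ (α - 1) * (u - c) ^ (-α)) (k * x + c)) =
      ∫ x in (0:ℝ)..1, k ^ (α - 1) * k ^ (-α) * ((1 - x) ^ (α - 1) * x ^ (-α)) := by
    apply intervalIntegral.integral_congr
    intro x hx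
    rw [Set.uIcc_of_le (by norm_num : (0:ℝ) ≤ 1)] at hx
    have hx0 : (0:ℝ) ≤ x := hx.1
    have hx1 : (0:ℝ) ≤ 1 - x := by linarith [hx.2]
    dsimp only
    have h1 : d - (k * x + c) = k * (1 - x) := by simp [hk]; ring
    have h2 : k * x + c - c = k * x := by ring
    rw [h1, h2, Real.mul_rpow hk0.le hx1, Real.mul_rpow hk0.le hx0]
    ring
  rw [hcongr] at comp
  rw [intervalIntegral.integral_const_mul] at comp
  have hbeta : (∫ x in (0:ℝ)..1, (1 - x) ^ (α - 1) * x ^ (-α)) = Real.Gamma (1 - α) * Real.Gamma α := by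
    rw [← beta01 hα0 hα1]
    apply intervalIntegral.integral_congr
    intro x _; dsimp only; ring
  rw [hbeta] at comp
  -- comp : k^(α-1) * k^(-α) * (Γ(1-α)Γα) = k⁻¹ • ∫ c..d f
  have : (∫ u in c..d, (d - u) ^ (α - 1) * (u - c) ^ (-α)) =
      k * (k ^ (α - 1) * k ^ (-α) * (Real.Gamma (1 - α) * Real.Gamma α)) := by
    rw [comp, smul_eq_mul]
    field_simp
  rw [this]
  have hkk : k * (k ^ (α - 1) * k ^ (-α)) = 1 := by
    have h1 : k ^ (α - 1) * k ^ (-α) = k ^ (-1 : ℝ) := by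
      rw [← Real.rpow_add hk0]
      norm_num
      rw [show α - 1 + -α = (-1 : ℝ) by ring]
    rw [h1, Real.rpow_neg_one]
    field_simp
  calc k * (k ^ (α - 1) * k ^ (-α) * (Real.Gamma (1 - α) * Real.Gamma α))
      = k * (k ^ (α - 1) * k ^ (-α)) * (Real.Gamma (1 - α) * Real.Gamma α) := by ring
    _ = Real.Gamma α * Real.Gamma (1 - α) := by rw [hkk]; ring

/-- transfer of integrability along ψ -/
lemma integrableOn_comp_psi
    (hψ_mono : StrictMonoOn ψ (Set.Icc 0 b))
    (hψ_deriv : ∀ z ∈ Set.Icc 0 b, HasDerivWithinAt ψ (ψ' z) (Set.Icc 0 b) z)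
    (hψ'_pos : ∀ z ∈ Set.Icc 0 b, 0 < ψ' z)
    {s t : ℝ} (hs : 0 ≤ s) (hst : s ≤ t) (htb : t ≤ b) {G : ℝ → ℝ}
    (hG : IntervalIntegrable G volume (ψ s) (ψ t)) :
    IntervalIntegrable (fun τ => ψ' τ * G (ψ τ)) volume s t := by
  rcases eq_or_lt_of_le hst with rfl | hlt
  · exact IntervalIntegrable.refl
  have hsb : s ∈ Set.Icc 0 b := ⟨hs, hlt.le.trans htb⟩
  have htb' : t ∈ Set.Icc 0 b := ⟨hs.trans hlt.le, htb⟩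
  have hψst : ψ s ≤ ψ t := (hψ_mono hsb htb' hlt).le
  have hsub : Set.Ioo s t ⊆ Set.Icc 0 b := fun x hx => ⟨hs.trans hx.1.le, hx.2.le.trans htb⟩
  have hderiv : ∀ x ∈ Set.Ioo s t, HasDerivWithinAt ψ (ψ' x) (Set.Ioo s t) x := fun x hx =>
    (hψ_deriv x (hsub hx)).mono hsub
  have hinj : Set.InjOn ψ (Set.Ioo s t) := (hψ_mono.injOn).mono hsub
  have hGIoo : IntegrableOn G (ψ '' Set.Ioo s t) := by
    rw [psi_image_Ioo hψ_mono hψ_deriv hs hlt htb]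
    exact ((intervalIntegrable_iff_integrableOn_Ioo_of_le hψst).mp hG)
  have := (integrableOn_image_iff_integrableOn_abs_deriv_smul measurableSet_Ioo hderiv hinj G).mp hGIoo
  rw [intervalIntegrable_iff_integrableOn_Ioo_of_le hlt.le]
  apply this.congr_fun ?_ measurableSet_Ioo
  intro x hx
  dsimp only
  rw [abs_of_pos (hψ'_pos x (hsub hx)), smul_eq_mul]

/-- K1 : integrability of `ψ' τ * (ψ Y - ψ τ)^(β-1) * f τ`. -/
lemma kernel1_integrable
    (hψ_mono : StrictMonoOn ψ (Set.Icc 0 b))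
    (hψ_deriv : ∀ z ∈ Set.Icc 0 b, HasDerivWithinAt ψ (ψ' z) (Set.Icc 0 b) z)
    (hψ'_pos : ∀ z ∈ Set.Icc 0 b, 0 < ψ' z)
    {β : ℝ} (hβ0 : 0 < β) {s t Y : ℝ} (hs : 0 ≤ s) (hst : s ≤ t) (htY : t ≤ Y) (hYb : Y ≤ b)
    {f : ℝ → ℝ} (hf : ContinuousOn f (Set.Icc 0 b)) :
    IntervalIntegrable (fun τ => ψ' τ * (ψ Y - ψ τ) ^ (β - 1) * f τ) volume s t := by
  have hG : IntervalIntegrable (fun u => (ψ Y - u) ^ (β - 1)) volume (ψ s) (ψ t) := by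
    have h0 := (intervalIntegrable_rpow' (a := ψ Y - ψ s) (b := ψ Y - ψ t)
      (by linarith : (-1:ℝ) < β - 1)).comp_sub_left (ψ Y)
    simpa using h0
  have h1 := integrableOn_comp_psi hψ_mono hψ_deriv hψ'_pos hs hst (le_trans htY hYb) (G := fun u => (ψ Y - u) ^ (β - 1)) hG
  have hf' : ContinuousOn f (Set.uIcc s t) := hf.mono (by
    rw [Set.uIcc_of_le hst]
    exact Set.Icc_subset_Icc hs (le_trans htY hYb))
  exact h1.mul_continuousOn hf'


/-- the basic ψ-kernel integral -/
lemma psi_kernel_integral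
    (hψ_mono : StrictMonoOn ψ (Set.Icc 0 b))
    (hψ_deriv : ∀ z ∈ Set.Icc 0 b, HasDerivWithinAt ψ (ψ' z) (Set.Icc 0 b) z)
    (hψ'_pos : ∀ z ∈ Set.Icc 0 b, 0 < ψ' z)
    {β : ℝ} (hβ : 0 < β) {s t Y : ℝ} (hs : 0 ≤ s) (hst : s ≤ t) (htY : t ≤ Y) (hYb : Y ≤ b) :
    ∫ τ in s..t, ψ' τ * (ψ Y - ψ τ) ^ (β - 1) =
      ((ψ Y - ψ s) ^ β - (ψ Y - ψ t) ^ β) / β := by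
  rw [integral_comp_psi hψ_mono hψ_deriv hψ'_pos hs hst (htY.trans hYb)
    (G := fun u => (ψ Y - u) ^ (β - 1))]
  exact integral_rpow_kernel hβ

/-- the Beta identity for the ψ-kernel -/
lemma beta_kernel_psi
    (hψ_mono : StrictMonoOn ψ (Set.Icc 0 b))
    (hψ_deriv : ∀ z ∈ Set.Icc 0 b, HasDerivWithinAt ψ (ψ' z) (Set.Icc 0 b) z)
    (hψ'_pos : ∀ z ∈ Set.Icc 0 b, 0 < ψ' z)
    {α : ℝ} (hα0 : 0 < α) (hα1 : α < 1) {τ₀ z : ℝ} (hτ0 : 0 ≤ τ₀) (hτz : τ₀ < z) (hzb : z ≤ b) :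
    ∫ κ in τ₀..z, ψ' κ * ((ψ z - ψ κ) ^ (α - 1) * (ψ κ - ψ τ₀) ^ (-α)) =
      Real.Gamma α * Real.Gamma (1 - α) := by
  have hτb : τ₀ ∈ Set.Icc 0 b := ⟨hτ0, hτz.le.trans hzb⟩
  have hzb' : z ∈ Set.Icc 0 b := ⟨hτ0.trans hτz.le, hzb⟩
  rw [integral_comp_psi hψ_mono hψ_deriv hψ'_pos hτ0 hτz.le hzb
    (G := fun u => (ψ z - u) ^ (α - 1) * (u - ψ τ₀) ^ (-α))]
  exact beta_kernel_integral hα0 hα1 (hψ_mono hτb hzb' hτz)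


/-- The Dirichlet/Fubini formula for the double fractional kernel. -/
lemma fubini_psi_kernel
    (hψ_mono : StrictMonoOn ψ (Set.Icc 0 b))
    (hψ_deriv : ∀ z ∈ Set.Icc 0 b, HasDerivWithinAt ψ (ψ' z) (Set.Icc 0 b) z)
    (hψ'_cont : ContinuousOn ψ' (Set.Icc 0 b))
    (hψ'_pos : ∀ z ∈ Set.Icc 0 b, 0 < ψ' z)
    {α : ℝ} (hα0 : 0 < α) (hα1 : α < 1) {h : ℝ → ℝ} (hh : ContinuousOn h (Set.Icc 0 b))
    {z : ℝ} (hz0 : 0 ≤ z) (hzb : z ≤ b) :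
    ∫ κ in (0:ℝ)..z, (ψ' κ * (ψ z - ψ κ) ^ (α - 1)) *
        (∫ τ in (0:ℝ)..κ, ψ' τ * (ψ κ - ψ τ) ^ (-α) * h τ) =
      Real.Gamma α * Real.Gamma (1 - α) * ∫ τ in (0:ℝ)..z, ψ' τ * h τ := by
  have hb0 : (0:ℝ) ≤ b := hz0.trans hzb
  have h0b : (0:ℝ) ∈ Set.Icc 0 b := ⟨le_refl 0, hb0⟩
  have hzmem : z ∈ Set.Icc 0 b := ⟨hz0, hzb⟩
  have hψ_cont : ContinuousOn ψ (Set.Icc 0 b) := fun x hx =>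
    (hψ_deriv x hx).continuousWithinAt
  rcases eq_or_lt_of_le hz0 with rfl | hz0'
  · simp
  -- bound for h
  obtain ⟨M0, hM0⟩ := (isCompact_Icc).exists_bound_of_continuousOn hh
  set M := max M0 0 with hM
  have hMnn : 0 ≤ M := le_max_right _ _
  have hMb : ∀ x ∈ Set.Icc 0 b, |h x| ≤ M := fun x hx =>
    le_trans (by simpa using hM0 x hx) (le_max_left _ _)
  -- the triangle and the kernel
  set S : Set (ℝ × ℝ) := {p : ℝ × ℝ | 0 < p.2 ∧ p.2 < p.1 ∧ p.1 < z} with hS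
  set K : ℝ × ℝ → ℝ := fun p =>
    (ψ' p.1 * (ψ z - ψ p.1) ^ (α - 1)) * (ψ' p.2 * (ψ p.1 - ψ p.2) ^ (-α) * h p.2) with hK
  set f : ℝ × ℝ → ℝ := S.indicator K with hf
  have hSm : MeasurableSet S := by
    have : S = {p : ℝ × ℝ | 0 < p.2} ∩ ({p : ℝ × ℝ | p.2 < p.1} ∩ {p : ℝ × ℝ | p.1 < z}) := by
      ext p; simp [hS, and_assoc]
    rw [this]
    exact (measurableSet_lt measurable_const measurable_snd).inter
      ((measurableSet_lt measurable_snd measurable_fst).inter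
        (measurableSet_lt measurable_fst measurable_const))
  have haux1 : ∀ p : ℝ × ℝ, p ∈ S → p.1 ∈ Set.Icc 0 b := fun p hp =>
    ⟨(hp.1.trans hp.2.1).le, hp.2.2.le.trans hzb⟩
  have haux2 : ∀ p : ℝ × ℝ, p ∈ S → p.2 ∈ Set.Icc 0 b := fun p hp =>
    ⟨hp.1.le, (hp.2.1.trans hp.2.2).le.trans hzb⟩
  -- continuity of K on S
  have hKcont : ContinuousOn K S := by
    apply ContinuousOn.mul
    · apply ContinuousOn.mul
      · exact hψ'_cont.comp continuous_fst.continuousOn haux1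
      · apply ContinuousOn.rpow_const
        · exact continuousOn_const.sub (hψ_cont.comp continuous_fst.continuousOn haux1)
        · intro p hp
          exact Or.inl (ne_of_gt (sub_pos.mpr (hψ_mono (haux1 p hp) hzmem hp.2.2)))
    · apply ContinuousOn.mul
      · apply ContinuousOn.mul
        · exact hψ'_cont.comp continuous_snd.continuousOn haux2
        · apply ContinuousOn.rpow_const
          · exact (hψ_cont.comp continuous_fst.continuousOn haux1).sub
              (hψ_cont.comp continuous_snd.continuousOn haux2)
          · intro p hp
            exact Or.inl (ne_of_gt (sub_pos.mpr (hψ_mono (haux2 p hp) (haux1 p hp) hp.2.1)))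
      · exact hh.comp continuous_snd.continuousOn haux2
  have hfm : AEStronglyMeasurable f (volume : Measure (ℝ × ℝ)) := by
    rw [hf, aestronglyMeasurable_indicator_iff hSm]
    exact hKcont.aestronglyMeasurable hSm
  -- sections in τ
  have hsec1 : ∀ κ, κ ∈ Set.Ioo 0 z → ∀ τ, f (κ, τ) = (Set.Ioo 0 κ).indicator (fun τ => K (κ, τ)) τ := by
    intro κ hκ τ
    by_cases hτ : τ ∈ Set.Ioo 0 κ
    · rw [Set.indicator_of_mem hτ, hf, Set.indicator_of_mem]
      exact ⟨hτ.1, hτ.2, hκ.2⟩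
    · rw [Set.indicator_of_notMem hτ, hf, Set.indicator_of_notMem]
      intro hmem
      exact hτ ⟨hmem.1, hmem.2.1⟩
  have hsec2 : ∀ κ, κ ∉ Set.Ioo 0 z → ∀ τ, f (κ, τ) = 0 := by
    intro κ hκ τ
    rw [hf, Set.indicator_of_notMem]
    intro hmem
    exact hκ ⟨hmem.1.trans hmem.2.1, hmem.2.2⟩
  -- sections in κ
  have hsecτ1 : ∀ τ, τ ∈ Set.Ioo 0 z → ∀ κ, f (κ, τ) = (Set.Ioo τ z).indicator (fun κ => K (κ, τ)) κ := by
    intro τ hτ κ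
    by_cases hκ : κ ∈ Set.Ioo τ z
    · rw [Set.indicator_of_mem hκ, hf, Set.indicator_of_mem]
      exact ⟨hτ.1, hκ.1, hκ.2⟩
    · rw [Set.indicator_of_notMem hκ, hf, Set.indicator_of_notMem]
      intro hmem
      exact hκ ⟨hmem.2.1, hmem.2.2⟩
  have hsecτ2 : ∀ τ, τ ∉ Set.Ioo 0 z → ∀ κ, f (κ, τ) = 0 := by
    intro τ hτ κ
    rw [hf, Set.indicator_of_notMem]
    intro hmem
    exact hτ ⟨hmem.1, hmem.2.1.trans hmem.2.2⟩
  -- integrability of τ-sections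
  have hsecint : ∀ κ, κ ∈ Set.Ioo 0 z → IntegrableOn (fun τ => K (κ, τ)) (Set.Ioo 0 κ) := by
    intro κ hκ
    have hκb : κ ∈ Set.Icc 0 b := ⟨hκ.1.le, hκ.2.le.trans hzb⟩
    have h1 : IntervalIntegrable (fun τ => ψ' τ * (ψ κ - ψ τ) ^ (-α) * h τ) volume 0 κ := by
      have := kernel1_integrable hψ_mono hψ_deriv hψ'_pos (β := 1 - α) (by linarith)
        (le_refl 0) hκ.1.le (le_refl κ) hκb.2 hh
      simpa only [show (1:ℝ) - α - 1 = -α by ring] using this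
    have h2 := (intervalIntegrable_iff_integrableOn_Ioo_of_le hκ.1.le).mp h1
    exact h2.const_mul (ψ' κ * (ψ z - ψ κ) ^ (α - 1))
  -- pointwise bound for sections
  have hptbound : ∀ κ, κ ∈ Set.Ioo 0 z → ∀ τ, τ ∈ Set.Ioo 0 κ →
      ‖K (κ, τ)‖ ≤ (ψ' κ * (ψ z - ψ κ) ^ (α - 1) * M) * (ψ' τ * (ψ κ - ψ τ) ^ (-α)) := by
    intro κ hκ τ hτ
    have hκb : κ ∈ Set.Icc 0 b := ⟨hκ.1.le, hκ.2.le.trans hzb⟩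
    have hτb : τ ∈ Set.Icc 0 b := ⟨hτ.1.le, (hτ.2.trans hκ.2).le.trans hzb⟩
    have h1 : 0 < ψ' κ := hψ'_pos κ hκb
    have h2 : 0 < ψ' τ := hψ'_pos τ hτb
    have h3 : (0:ℝ) ≤ (ψ z - ψ κ) ^ (α - 1) :=
      Real.rpow_nonneg (sub_nonneg.mpr (hψ_mono hκb hzmem hκ.2).le) _
    have h4 : (0:ℝ) ≤ (ψ κ - ψ τ) ^ (-α) :=
      Real.rpow_nonneg (sub_nonneg.mpr (hψ_mono hτb hκb hτ.2).le) _
    have h5 : |h τ| ≤ M := hMb τ hτb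
    have habs : ‖K (κ, τ)‖ = (ψ' κ * (ψ z - ψ κ) ^ (α - 1)) *
        (ψ' τ * (ψ κ - ψ τ) ^ (-α) * |h τ|) := by
      rw [hK, Real.norm_eq_abs]
      dsimp only
      rw [abs_mul, abs_mul, abs_mul, abs_mul, abs_of_pos h1, abs_of_pos h2,
        abs_of_nonneg h3, abs_of_nonneg h4]
    rw [habs]
    have h6 : 0 ≤ (ψ' κ * (ψ z - ψ κ) ^ (α - 1)) * (ψ' τ * (ψ κ - ψ τ) ^ (-α)) :=
      mul_nonneg (mul_nonneg h1.le h3) (mul_nonneg h2.le h4)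
    calc (ψ' κ * (ψ z - ψ κ) ^ (α - 1)) * (ψ' τ * (ψ κ - ψ τ) ^ (-α) * |h τ|)
        = ((ψ' κ * (ψ z - ψ κ) ^ (α - 1)) * (ψ' τ * (ψ κ - ψ τ) ^ (-α))) * |h τ| := by ring
      _ ≤ ((ψ' κ * (ψ z - ψ κ) ^ (α - 1)) * (ψ' τ * (ψ κ - ψ τ) ^ (-α))) * M :=
          mul_le_mul_of_nonneg_left h5 h6
      _ = (ψ' κ * (ψ z - ψ κ) ^ (α - 1) * M) * (ψ' τ * (ψ κ - ψ τ) ^ (-α)) := by ring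
  -- the dominating function
  set C : ℝ := M * (ψ b - ψ 0) ^ (1 - α) / (1 - α) with hC
  have hbb : b ∈ Set.Icc 0 b := ⟨hb0, le_refl b⟩
  have hCnn : 0 ≤ C := by
    rw [hC]
    have h0' : (0:ℝ) ≤ (ψ b - ψ 0) ^ (1 - α) :=
      Real.rpow_nonneg (sub_nonneg.mpr ((hψ_mono.le_iff_le h0b hbb).mpr hb0)) _
    exact div_nonneg (mul_nonneg hMnn h0') (by linarith)
  set g : ℝ → ℝ := (Set.Ioo 0 z).indicator (fun κ => ψ' κ * (ψ z - ψ κ) ^ (α - 1) * C) with hg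
  have hgint : Integrable g := by
    rw [hg, integrable_indicator_iff measurableSet_Ioo]
    exact (intervalIntegrable_iff_integrableOn_Ioo_of_le hz0).mp
      (kernel1_integrable hψ_mono hψ_deriv hψ'_pos hα0 (le_refl 0) hz0 (le_refl z) hzb
        (f := fun _ => C) continuousOn_const)
  -- value/bound of the inner norm integral
  have hinner : ∀ κ, κ ∈ Set.Ioo 0 z → ∫ τ, ‖f (κ, τ)‖ ≤ ψ' κ * (ψ z - ψ κ) ^ (α - 1) * C := by
    intro κ hκ
    have hκb : κ ∈ Set.Icc 0 b := ⟨hκ.1.le, hκ.2.le.trans hzb⟩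
    have hA : (0:ℝ) ≤ ψ' κ * (ψ z - ψ κ) ^ (α - 1) :=
      mul_nonneg (hψ'_pos κ hκb).le
        (Real.rpow_nonneg (sub_nonneg.mpr (hψ_mono hκb hzmem hκ.2).le) _)
    have hbase : IntervalIntegrable (fun τ => ψ' τ * (ψ κ - ψ τ) ^ (-α)) volume 0 κ := by
      have := kernel1_integrable hψ_mono hψ_deriv hψ'_pos (β := 1 - α) (by linarith)
        (le_refl 0) hκ.1.le (le_refl κ) hκb.2 (f := fun _ => (1:ℝ)) continuousOn_const
      simpa only [mul_one, show (1:ℝ) - α - 1 = -α by ring] using this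
    have hbaseIoo : IntegrableOn (fun τ => ψ' τ * (ψ κ - ψ τ) ^ (-α)) (Set.Ioo 0 κ) :=
      (intervalIntegrable_iff_integrableOn_Ioo_of_le hκ.1.le).mp hbase
    have hIκ : ∫ τ, ‖f (κ, τ)‖ = ∫ τ in Set.Ioo 0 κ, ‖K (κ, τ)‖ := by
      have heq : (fun τ => ‖f (κ, τ)‖) = (Set.Ioo 0 κ).indicator (fun τ => ‖K (κ, τ)‖) := by
        funext τ
        rw [hsec1 κ hκ τ, norm_indicator_eq_indicator_norm]
      rw [heq, MeasureTheory.integral_indicator measurableSet_Ioo]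
    rw [hIκ]
    have hstep1 : ∫ τ in Set.Ioo 0 κ, ‖K (κ, τ)‖ ≤
        ∫ τ in Set.Ioo 0 κ, (ψ' κ * (ψ z - ψ κ) ^ (α - 1) * M) * (ψ' τ * (ψ κ - ψ τ) ^ (-α)) := by
      apply setIntegral_mono_on ((hsecint κ hκ).norm)
        (hbaseIoo.const_mul (ψ' κ * (ψ z - ψ κ) ^ (α - 1) * M)) measurableSet_Ioo
      exact hptbound κ hκ
    have hstep2 : ∫ τ in Set.Ioo 0 κ, (ψ' κ * (ψ z - ψ κ) ^ (α - 1) * M) * (ψ' τ * (ψ κ - ψ τ) ^ (-α))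
        = (ψ' κ * (ψ z - ψ κ) ^ (α - 1) * M) * ((ψ κ - ψ 0) ^ (1 - α) / (1 - α)) := by
      rw [MeasureTheory.integral_const_mul]
      congr 1
      have : ∫ τ in Set.Ioo 0 κ, ψ' τ * (ψ κ - ψ τ) ^ (-α) =
          ∫ τ in (0:ℝ)..κ, ψ' τ * (ψ κ - ψ τ) ^ (-α) := by
        rw [intervalIntegral.integral_of_le hκ.1.le, integral_Ioc_eq_integral_Ioo]
      rw [this]
      have hval := psi_kernel_integral hψ_mono hψ_deriv hψ'_pos (β := 1 - α)
        (by linarith) (le_refl 0) hκ.1.le (le_refl κ) hκb.2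
      rw [show ((1:ℝ) - α - 1) = -α by ring] at hval
      rw [hval, sub_self, Real.zero_rpow (by linarith : (1:ℝ) - α ≠ 0), sub_zero]
    have hstep3 : (ψ' κ * (ψ z - ψ κ) ^ (α - 1) * M) * ((ψ κ - ψ 0) ^ (1 - α) / (1 - α)) ≤
        ψ' κ * (ψ z - ψ κ) ^ (α - 1) * C := by
      rw [hC]
      have h7 : (ψ κ - ψ 0) ^ (1 - α) ≤ (ψ b - ψ 0) ^ (1 - α) := by
        apply Real.rpow_le_rpow (sub_nonneg.mpr ((hψ_mono.le_iff_le h0b hκb).mpr hκ.1.le))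
          (by linarith [(hψ_mono.le_iff_le hκb hbb).mpr hκb.2]) (by linarith)
      calc (ψ' κ * (ψ z - ψ κ) ^ (α - 1) * M) * ((ψ κ - ψ 0) ^ (1 - α) / (1 - α))
          = (ψ' κ * (ψ z - ψ κ) ^ (α - 1)) * (M * (ψ κ - ψ 0) ^ (1 - α) / (1 - α)) := by ring
        _ ≤ (ψ' κ * (ψ z - ψ κ) ^ (α - 1)) * (M * (ψ b - ψ 0) ^ (1 - α) / (1 - α)) := by
            exact mul_le_mul_of_nonneg_left
              (div_le_div_of_nonneg_right (mul_le_mul_of_nonneg_left h7 hMnn) (by linarith)) hA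
        _ = ψ' κ * (ψ z - ψ κ) ^ (α - 1) * (M * (ψ b - ψ 0) ^ (1 - α) / (1 - α)) := by ring
    linarith [hstep1, hstep2.le, hstep3]
  -- integrability on the product
  have hfm' : AEStronglyMeasurable f ((volume : Measure ℝ).prod (volume : Measure ℝ)) := by
    rwa [MeasureTheory.Measure.volume_eq_prod] at hfm
  have hint2 : Integrable f ((volume : Measure ℝ).prod (volume : Measure ℝ)) := by
    rw [MeasureTheory.integrable_prod_iff hfm']
    constructor
    · apply Filter.Eventually.of_forall
      intro κ
      by_cases hκ : κ ∈ Set.Ioo 0 z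
      · have heq : (fun τ => f (κ, τ)) = (Set.Ioo 0 κ).indicator (fun τ => K (κ, τ)) :=
          funext (hsec1 κ hκ)
        rw [heq, integrable_indicator_iff measurableSet_Ioo]
        exact hsecint κ hκ
      · have heq : (fun τ => f (κ, τ)) = fun _ => (0:ℝ) := funext (hsec2 κ hκ)
        rw [heq]
        exact integrable_zero _ _ _
    · apply Integrable.mono hgint
      · exact hfm'.norm.integral_prod_right'
      · apply Filter.Eventually.of_forall
        intro κ
        by_cases hκ : κ ∈ Set.Ioo 0 z
        · have h1 := hinner κ hκ
          have h2 : (0:ℝ) ≤ ∫ τ, ‖f (κ, τ)‖ := integral_nonneg fun τ => norm_nonneg _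
          rw [hg]
          rw [Real.norm_eq_abs, Real.norm_eq_abs, abs_of_nonneg h2,
            Set.indicator_of_mem hκ, abs_of_nonneg]
          · exact h1
          · have hκb : κ ∈ Set.Icc 0 b := ⟨hκ.1.le, hκ.2.le.trans hzb⟩
            exact mul_nonneg (mul_nonneg (hψ'_pos κ hκb).le
              (Real.rpow_nonneg (sub_nonneg.mpr (hψ_mono hκb hzmem hκ.2).le) _)) hCnn
        · have heq : (fun τ => ‖f (κ, τ)‖) = fun _ => (0:ℝ) :=
            funext fun τ => by rw [hsec2 κ hκ τ, norm_zero]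
          rw [heq, hg, Set.indicator_of_notMem hκ]
          simp
  -- Fubini
  have swap := MeasureTheory.integral_integral_swap (f := fun κ τ => f (κ, τ)) hint2
  -- identify the left side
  have hLHS : (∫ κ, ∫ τ, f (κ, τ)) =
      ∫ κ in (0:ℝ)..z, (ψ' κ * (ψ z - ψ κ) ^ (α - 1)) *
        (∫ τ in (0:ℝ)..κ, ψ' τ * (ψ κ - ψ τ) ^ (-α) * h τ) := by
    have h1 : (fun κ => ∫ τ, f (κ, τ)) = (Set.Ioo 0 z).indicator
        (fun κ => (ψ' κ * (ψ z - ψ κ) ^ (α - 1)) *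
          (∫ τ in (0:ℝ)..κ, ψ' τ * (ψ κ - ψ τ) ^ (-α) * h τ)) := by
      funext κ
      by_cases hκ : κ ∈ Set.Ioo 0 z
      · rw [Set.indicator_of_mem hκ]
        have heq : (fun τ => f (κ, τ)) = (Set.Ioo 0 κ).indicator (fun τ => K (κ, τ)) :=
          funext (hsec1 κ hκ)
        rw [heq, MeasureTheory.integral_indicator measurableSet_Ioo]
        have h2 : ∫ τ in Set.Ioo 0 κ, K (κ, τ) = (ψ' κ * (ψ z - ψ κ) ^ (α - 1)) *
            ∫ τ in Set.Ioo 0 κ, ψ' τ * (ψ κ - ψ τ) ^ (-α) * h τ := by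
          rw [← MeasureTheory.integral_const_mul]
        rw [h2, intervalIntegral.integral_of_le hκ.1.le, integral_Ioc_eq_integral_Ioo]
      · rw [Set.indicator_of_notMem hκ]
        have heq : (fun τ => f (κ, τ)) = fun _ => (0:ℝ) := funext (hsec2 κ hκ)
        rw [heq]
        exact integral_zero _ _
    rw [h1, MeasureTheory.integral_indicator measurableSet_Ioo,
      intervalIntegral.integral_of_le hz0, integral_Ioc_eq_integral_Ioo]
  -- identify the right side
  have hRHS : (∫ τ, ∫ κ, f (κ, τ)) =
      Real.Gamma α * Real.Gamma (1 - α) * ∫ τ in (0:ℝ)..z, ψ' τ * h τ := by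
    have h1 : (fun τ => ∫ κ, f (κ, τ)) = (Set.Ioo 0 z).indicator
        (fun τ => (Real.Gamma α * Real.Gamma (1 - α)) * (ψ' τ * h τ)) := by
      funext τ
      by_cases hτ : τ ∈ Set.Ioo 0 z
      · rw [Set.indicator_of_mem hτ]
        have heq : (fun κ => f (κ, τ)) = (Set.Ioo τ z).indicator (fun κ => K (κ, τ)) :=
          funext (hsecτ1 τ hτ)
        rw [heq, MeasureTheory.integral_indicator measurableSet_Ioo]
        have h3 : ∫ κ in Set.Ioo τ z, K (κ, τ) = ∫ κ in τ..z,
            (ψ' τ * h τ) * (ψ' κ * ((ψ z - ψ κ) ^ (α - 1) * (ψ κ - ψ τ) ^ (-α))) := by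
          rw [intervalIntegral.integral_of_le hτ.2.le, integral_Ioc_eq_integral_Ioo]
          apply setIntegral_congr_fun measurableSet_Ioo
          intro κ hκ
          rw [hK]
          dsimp only
          ring
        rw [h3, intervalIntegral.integral_const_mul,
          beta_kernel_psi hψ_mono hψ_deriv hψ'_pos hα0 hα1 hτ.1.le hτ.2 hzb]
        ring
      · rw [Set.indicator_of_notMem hτ]
        have heq : (fun κ => f (κ, τ)) = fun _ => (0:ℝ) := funext (hsecτ2 τ hτ)
        rw [heq]
        exact integral_zero _ _
    rw [h1, MeasureTheory.integral_indicator measurableSet_Ioo,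
      MeasureTheory.integral_const_mul, intervalIntegral.integral_of_le hz0,
      integral_Ioc_eq_integral_Ioo]
  rw [← hLHS, ← hRHS]
  exact swap


/-- Hölder-type estimate for the ψ-fractional integral. -/
lemma frac_int_holder
    (hψ_mono : StrictMonoOn ψ (Set.Icc 0 b))
    (hψ_deriv : ∀ z ∈ Set.Icc 0 b, HasDerivWithinAt ψ (ψ' z) (Set.Icc 0 b) z)
    (hψ'_pos : ∀ z ∈ Set.Icc 0 b, 0 < ψ' z)
    {β : ℝ} (hβ0 : 0 < β) (hβ1 : β ≤ 1) {f : ℝ → ℝ} {M : ℝ}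
    (hfM : ∀ x ∈ Set.Icc 0 b, |f x| ≤ M) (hf : ContinuousOn f (Set.Icc 0 b))
    {y₁ y₂ : ℝ} (h1 : 0 ≤ y₁) (h12 : y₁ ≤ y₂) (h2b : y₂ ≤ b) :
    |(∫ τ in (0:ℝ)..y₂, ψ' τ * (ψ y₂ - ψ τ) ^ (β - 1) * f τ) -
      ∫ τ in (0:ℝ)..y₁, ψ' τ * (ψ y₁ - ψ τ) ^ (β - 1) * f τ| ≤
      2 * M * (ψ y₂ - ψ y₁) ^ β / β := by
  have hy1 : y₁ ∈ Set.Icc 0 b := ⟨h1, h12.trans h2b⟩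
  have hy2 : y₂ ∈ Set.Icc 0 b := ⟨h1.trans h12, h2b⟩
  have h0b : (0:ℝ) ∈ Set.Icc 0 b := ⟨le_refl 0, h1.trans (h12.trans h2b)⟩
  have hM0 : 0 ≤ M := le_trans (abs_nonneg _) (hfM 0 h0b)
  have hψ12 : ψ y₁ ≤ ψ y₂ := (hψ_mono.le_iff_le hy1 hy2).mpr h12
  have hψ01 : ψ 0 ≤ ψ y₁ := (hψ_mono.le_iff_le h0b hy1).mpr h1
  have hψ02 : ψ 0 ≤ ψ y₂ := hψ01.trans hψ12
  -- integrabilities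
  have hI21 : IntervalIntegrable (fun τ => ψ' τ * (ψ y₂ - ψ τ) ^ (β - 1) * f τ) volume 0 y₁ :=
    kernel1_integrable hψ_mono hψ_deriv hψ'_pos hβ0 (le_refl 0) h1 h12 h2b hf
  have hI22 : IntervalIntegrable (fun τ => ψ' τ * (ψ y₂ - ψ τ) ^ (β - 1) * f τ) volume y₁ y₂ :=
    kernel1_integrable hψ_mono hψ_deriv hψ'_pos hβ0 h1 h12 (le_refl y₂) h2b hf
  have hI11 : IntervalIntegrable (fun τ => ψ' τ * (ψ y₁ - ψ τ) ^ (β - 1) * f τ) volume 0 y₁ :=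
    kernel1_integrable hψ_mono hψ_deriv hψ'_pos hβ0 (le_refl 0) h1 (le_refl y₁) (h12.trans h2b) hf
  -- split
  have hsplit : (∫ τ in (0:ℝ)..y₂, ψ' τ * (ψ y₂ - ψ τ) ^ (β - 1) * f τ) =
      (∫ τ in (0:ℝ)..y₁, ψ' τ * (ψ y₂ - ψ τ) ^ (β - 1) * f τ) +
      ∫ τ in y₁..y₂, ψ' τ * (ψ y₂ - ψ τ) ^ (β - 1) * f τ :=
    (intervalIntegral.integral_add_adjacent_intervals hI21 hI22).symm
  set T1 : ℝ := (∫ τ in (0:ℝ)..y₁, ψ' τ * (ψ y₂ - ψ τ) ^ (β - 1) * f τ) -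
      ∫ τ in (0:ℝ)..y₁, ψ' τ * (ψ y₁ - ψ τ) ^ (β - 1) * f τ with hT1def
  set T2 : ℝ := ∫ τ in y₁..y₂, ψ' τ * (ψ y₂ - ψ τ) ^ (β - 1) * f τ with hT2def
  have hdecomp : (∫ τ in (0:ℝ)..y₂, ψ' τ * (ψ y₂ - ψ τ) ^ (β - 1) * f τ) -
      (∫ τ in (0:ℝ)..y₁, ψ' τ * (ψ y₁ - ψ τ) ^ (β - 1) * f τ) = T1 + T2 := by
    rw [hsplit, hT1def, hT2def]; ring
  -- T2 bound
  have hT2bound : |T2| ≤ M * (ψ y₂ - ψ y₁) ^ β / β := by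
    have habs : |T2| ≤ ∫ τ in y₁..y₂, |ψ' τ * (ψ y₂ - ψ τ) ^ (β - 1) * f τ| :=
      intervalIntegral.abs_integral_le_integral_abs h12
    have hmono : (∫ τ in y₁..y₂, |ψ' τ * (ψ y₂ - ψ τ) ^ (β - 1) * f τ|) ≤
        ∫ τ in y₁..y₂, ψ' τ * (ψ y₂ - ψ τ) ^ (β - 1) * M := by
      apply intervalIntegral.integral_mono_on h12 hI22.abs
        (kernel1_integrable hψ_mono hψ_deriv hψ'_pos hβ0 h1 h12 (le_refl y₂) h2b
          (f := fun _ => M) continuousOn_const)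
      intro τ hτ
      have hτb : τ ∈ Set.Icc 0 b := ⟨h1.trans hτ.1, hτ.2.trans h2b⟩
      have h3 : (0:ℝ) ≤ (ψ y₂ - ψ τ) ^ (β - 1) :=
        Real.rpow_nonneg (sub_nonneg.mpr ((hψ_mono.le_iff_le hτb hy2).mpr hτ.2)) _
      rw [abs_mul, abs_mul, abs_of_pos (hψ'_pos τ hτb), abs_of_nonneg h3]
      exact mul_le_mul_of_nonneg_left (hfM τ hτb) (mul_nonneg (hψ'_pos τ hτb).le h3)
    have hval : (∫ τ in y₁..y₂, ψ' τ * (ψ y₂ - ψ τ) ^ (β - 1) * M) =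
        M * (ψ y₂ - ψ y₁) ^ β / β := by
      rw [intervalIntegral.integral_mul_const,
        psi_kernel_integral hψ_mono hψ_deriv hψ'_pos hβ0 h1 h12 (le_refl y₂) h2b,
        sub_self, Real.zero_rpow (ne_of_gt hβ0), sub_zero]
      ring
    linarith
  -- T1 bound
  have hT1bound : |T1| ≤ M * (ψ y₂ - ψ y₁) ^ β / β := by
    have hdiff : T1 = ∫ τ in (0:ℝ)..y₁,
        (ψ' τ * (ψ y₂ - ψ τ) ^ (β - 1) * f τ - ψ' τ * (ψ y₁ - ψ τ) ^ (β - 1) * f τ) := by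
      rw [hT1def, intervalIntegral.integral_sub hI21 hI11]
    have habs : |T1| ≤ ∫ τ in (0:ℝ)..y₁,
        |ψ' τ * (ψ y₂ - ψ τ) ^ (β - 1) * f τ - ψ' τ * (ψ y₁ - ψ τ) ^ (β - 1) * f τ| := by
      rw [hdiff]
      exact intervalIntegral.abs_integral_le_integral_abs h1
    have hbint : IntervalIntegrable (fun τ =>
        ψ' τ * (ψ y₁ - ψ τ) ^ (β - 1) * M - ψ' τ * (ψ y₂ - ψ τ) ^ (β - 1) * M) volume 0 y₁ :=
      (kernel1_integrable hψ_mono hψ_deriv hψ'_pos hβ0 (le_refl 0) h1 (le_refl y₁)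
          (h12.trans h2b) (f := fun _ => M) continuousOn_const).sub
        (kernel1_integrable hψ_mono hψ_deriv hψ'_pos hβ0 (le_refl 0) h1 h12 h2b
          (f := fun _ => M) continuousOn_const)
    have hmono : (∫ τ in (0:ℝ)..y₁,
        |ψ' τ * (ψ y₂ - ψ τ) ^ (β - 1) * f τ - ψ' τ * (ψ y₁ - ψ τ) ^ (β - 1) * f τ|) ≤
        ∫ τ in (0:ℝ)..y₁,
        (ψ' τ * (ψ y₁ - ψ τ) ^ (β - 1) * M - ψ' τ * (ψ y₂ - ψ τ) ^ (β - 1) * M) := by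
      apply intervalIntegral.integral_mono_ae_restrict h1 (hI21.sub hI11).abs hbint
      have hae : ∀ᵐ τ ∂(volume.restrict (Set.Icc 0 y₁)), τ ≠ y₁ := by
        refine ae_restrict_of_ae ?_
        have hsing : (volume : Measure ℝ) {y₁} = 0 := measure_singleton y₁
        rw [ae_iff]
        convert hsing using 2
        ext τ; simp
      filter_upwards [hae, ae_restrict_mem measurableSet_Icc] with τ hτne hτmem
      have hτy1 : τ < y₁ := lt_of_le_of_ne hτmem.2 hτne
      have hτb : τ ∈ Set.Icc 0 b := ⟨hτmem.1, hτmem.2.trans (h12.trans h2b)⟩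
      have hbase1 : 0 < ψ y₁ - ψ τ := sub_pos.mpr (hψ_mono hτb hy1 hτy1)
      have hle : (ψ y₂ - ψ τ) ^ (β - 1) ≤ (ψ y₁ - ψ τ) ^ (β - 1) :=
        Real.rpow_le_rpow_of_nonpos hbase1 (by linarith) (by linarith)
      have h3 : (0:ℝ) ≤ (ψ y₂ - ψ τ) ^ (β - 1) :=
        Real.rpow_nonneg (by linarith [hbase1, hψ12] : (0:ℝ) ≤ ψ y₂ - ψ τ) _
      have hψ'τ : 0 < ψ' τ := hψ'_pos τ hτb
      have hfτ : |f τ| ≤ M := hfM τ hτb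
      have hrw : ψ' τ * (ψ y₂ - ψ τ) ^ (β - 1) * f τ - ψ' τ * (ψ y₁ - ψ τ) ^ (β - 1) * f τ =
          ψ' τ * ((ψ y₂ - ψ τ) ^ (β - 1) - (ψ y₁ - ψ τ) ^ (β - 1)) * f τ := by ring
      rw [hrw, abs_mul, abs_mul, abs_of_pos hψ'τ]
      calc ψ' τ * |(ψ y₂ - ψ τ) ^ (β - 1) - (ψ y₁ - ψ τ) ^ (β - 1)| * |f τ|
          ≤ ψ' τ * ((ψ y₁ - ψ τ) ^ (β - 1) - (ψ y₂ - ψ τ) ^ (β - 1)) * M := by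
            apply mul_le_mul
            · apply mul_le_mul_of_nonneg_left _ hψ'τ.le
              rw [abs_sub_comm, abs_of_nonneg (by linarith)]
            · exact hfτ
            · exact abs_nonneg _
            · exact mul_nonneg hψ'τ.le (by linarith)
        _ = ψ' τ * (ψ y₁ - ψ τ) ^ (β - 1) * M - ψ' τ * (ψ y₂ - ψ τ) ^ (β - 1) * M := by ring
    have hval : (∫ τ in (0:ℝ)..y₁,
        (ψ' τ * (ψ y₁ - ψ τ) ^ (β - 1) * M - ψ' τ * (ψ y₂ - ψ τ) ^ (β - 1) * M)) =
        M * (((ψ y₁ - ψ 0) ^ β - 0) / β - ((ψ y₂ - ψ 0) ^ β - (ψ y₂ - ψ y₁) ^ β) / β) := by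
      rw [intervalIntegral.integral_sub
        (kernel1_integrable hψ_mono hψ_deriv hψ'_pos hβ0 (le_refl 0) h1 (le_refl y₁)
          (h12.trans h2b) (f := fun _ => M) continuousOn_const)
        (kernel1_integrable hψ_mono hψ_deriv hψ'_pos hβ0 (le_refl 0) h1 h12 h2b
          (f := fun _ => M) continuousOn_const),
        intervalIntegral.integral_mul_const, intervalIntegral.integral_mul_const,
        psi_kernel_integral hψ_mono hψ_deriv hψ'_pos hβ0 (le_refl 0) h1 (le_refl y₁)
          (h12.trans h2b),
        psi_kernel_integral hψ_mono hψ_deriv hψ'_pos hβ0 (le_refl 0) h1 h12 h2b,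
        sub_self, Real.zero_rpow (ne_of_gt hβ0)]
      ring
    have hfin : M * (((ψ y₁ - ψ 0) ^ β - 0) / β - ((ψ y₂ - ψ 0) ^ β - (ψ y₂ - ψ y₁) ^ β) / β) ≤
        M * (ψ y₂ - ψ y₁) ^ β / β := by
      have h5 : (ψ y₁ - ψ 0) ^ β ≤ (ψ y₂ - ψ 0) ^ β :=
        Real.rpow_le_rpow (by linarith) (by linarith) hβ0.le
      have := div_le_div_of_nonneg_right (sub_le_sub_right
        (by linarith : (ψ y₁ - ψ 0) ^ β + (ψ y₂ - ψ y₁) ^ β ≤ (ψ y₂ - ψ 0) ^ β + (ψ y₂ - ψ y₁) ^ β) ((ψ y₂ - ψ 0) ^ β)) hβ0.le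
      calc M * (((ψ y₁ - ψ 0) ^ β - 0) / β - ((ψ y₂ - ψ 0) ^ β - (ψ y₂ - ψ y₁) ^ β) / β)
          = M * (((ψ y₁ - ψ 0) ^ β + (ψ y₂ - ψ y₁) ^ β - (ψ y₂ - ψ 0) ^ β) / β) := by ring
        _ ≤ M * ((ψ y₂ - ψ 0) ^ β + (ψ y₂ - ψ y₁) ^ β - (ψ y₂ - ψ 0) ^ β) / β := by
            rw [mul_div_assoc]
            exact mul_le_mul_of_nonneg_left this hM0
        _ = M * (ψ y₂ - ψ y₁) ^ β / β := by ring
    linarith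
  calc |(∫ τ in (0:ℝ)..y₂, ψ' τ * (ψ y₂ - ψ τ) ^ (β - 1) * f τ) -
      ∫ τ in (0:ℝ)..y₁, ψ' τ * (ψ y₁ - ψ τ) ^ (β - 1) * f τ| = |T1 + T2| := by rw [hdecomp]
    _ ≤ |T1| + |T2| := abs_add_le _ _
    _ ≤ M * (ψ y₂ - ψ y₁) ^ β / β + M * (ψ y₂ - ψ y₁) ^ β / β := add_le_add hT1bound hT2bound
    _ = 2 * M * (ψ y₂ - ψ y₁) ^ β / β := by ring

/-- Continuity of the ψ-fractional integral of a continuous function. -/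
lemma frac_int_continuousOn
    (hψ_mono : StrictMonoOn ψ (Set.Icc 0 b))
    (hψ_deriv : ∀ z ∈ Set.Icc 0 b, HasDerivWithinAt ψ (ψ' z) (Set.Icc 0 b) z)
    (hψ'_pos : ∀ z ∈ Set.Icc 0 b, 0 < ψ' z)
    {β : ℝ} (hβ0 : 0 < β) (hβ1 : β ≤ 1) {f : ℝ → ℝ} (hf : ContinuousOn f (Set.Icc 0 b)) :
    ContinuousOn (fun y => ∫ τ in (0:ℝ)..y, ψ' τ * (ψ y - ψ τ) ^ (β - 1) * f τ)
      (Set.Icc 0 b) := by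
  have hψ_cont : ContinuousOn ψ (Set.Icc 0 b) := fun x hx => (hψ_deriv x hx).continuousWithinAt
  obtain ⟨M0, hM0⟩ := (isCompact_Icc).exists_bound_of_continuousOn hf
  set M := max M0 0 with hM
  have hMb : ∀ x ∈ Set.Icc 0 b, |f x| ≤ M := fun x hx =>
    le_trans (by simpa using hM0 x hx) (le_max_left _ _)
  intro y₀ hy₀
  set J : ℝ → ℝ := fun y => ∫ τ in (0:ℝ)..y, ψ' τ * (ψ y - ψ τ) ^ (β - 1) * f τ with hJ
  have key : ∀ y ∈ Set.Icc 0 b, |J y - J y₀| ≤ 2 * M * |ψ y - ψ y₀| ^ β / β := by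
    intro y hy
    rcases le_total y y₀ with hle | hle
    · have h0 := frac_int_holder hψ_mono hψ_deriv hψ'_pos hβ0 hβ1 hMb hf hy.1 hle hy₀.2
      rw [abs_sub_comm, abs_sub_comm (ψ y) (ψ y₀),
        abs_of_nonneg (sub_nonneg.mpr ((hψ_mono.le_iff_le hy hy₀).mpr hle))]
      exact h0
    · have h0 := frac_int_holder hψ_mono hψ_deriv hψ'_pos hβ0 hβ1 hMb hf hy₀.1 hle hy.2
      rw [abs_of_nonneg (sub_nonneg.mpr ((hψ_mono.le_iff_le hy₀ hy).mpr hle))]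
      exact h0

  have hbnd : Filter.Tendsto (fun y => 2 * M * |ψ y - ψ y₀| ^ β / β)
      (nhdsWithin y₀ (Set.Icc 0 b)) (nhds 0) := by
    have h1 : Filter.Tendsto (fun y => ψ y - ψ y₀) (nhdsWithin y₀ (Set.Icc 0 b))
        (nhds 0) := by
      have := (hψ_cont y₀ hy₀).sub_const (ψ y₀)
      rwa [sub_self] at this
    have h2 : Filter.Tendsto (fun y => |ψ y - ψ y₀|) (nhdsWithin y₀ (Set.Icc 0 b)) (nhds 0) := by
      have := h1.abs
      rwa [abs_zero] at this
    have h3 : Filter.Tendsto (fun y => |ψ y - ψ y₀| ^ β) (nhdsWithin y₀ (Set.Icc 0 b))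
        (nhds 0) := by
      have hc := (Real.continuousAt_rpow_const 0 β (Or.inr hβ0.le)).tendsto
      rw [Real.zero_rpow (ne_of_gt hβ0)] at hc
      exact hc.comp h2
    have := (h3.const_mul (2 * M)).div_const β
    simpa using this
  have hdist : Filter.Tendsto (fun y => dist (J y) (J y₀)) (nhdsWithin y₀ (Set.Icc 0 b))
      (nhds 0) := by
    apply squeeze_zero' (Filter.Eventually.of_forall fun y => dist_nonneg) _ hbnd
    filter_upwards [self_mem_nhdsWithin] with y hy
    rw [Real.dist_eq]
    exact key y hy
  exact tendsto_iff_dist_tendsto_zero.mpr hdist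


/-- Continuity of the parametric ψ-fractional integral `y ↦ I^α[H(y,⋅,w(⋅))](y)`. -/
lemma frac_int_param_continuousOn
    (hψ_mono : StrictMonoOn ψ (Set.Icc 0 b))
    (hψ_deriv : ∀ z ∈ Set.Icc 0 b, HasDerivWithinAt ψ (ψ' z) (Set.Icc 0 b) z)
    (hψ'_pos : ∀ z ∈ Set.Icc 0 b, 0 < ψ' z)
    {α : ℝ} (hα0 : 0 < α) (hα1 : α < 1) {w : ℝ → ℝ} (hw : ContinuousOn w (Set.Icc 0 b))
    {H : ℝ → ℝ → ℝ → ℝ}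
    (hH_cont : ContinuousOn (fun p : ℝ × ℝ × ℝ => H p.1 p.2.1 p.2.2)
      (Set.Icc 0 b ×ˢ Set.Icc 0 b ×ˢ (Set.univ : Set ℝ))) :
    ContinuousOn (fun y => ∫ τ in (0:ℝ)..y, ψ' τ * (ψ y - ψ τ) ^ (α - 1) * H y τ (w τ))
      (Set.Icc 0 b) := by
  have hψ_cont : ContinuousOn ψ (Set.Icc 0 b) := fun x hx => (hψ_deriv x hx).continuousWithinAt
  obtain ⟨R0, hR0⟩ := (isCompact_Icc).exists_bound_of_continuousOn hw
  set R := max R0 0 with hR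
  have hRb : ∀ x ∈ Set.Icc 0 b, |w x| ≤ R := fun x hx =>
    le_trans (by simpa using hR0 x hx) (le_max_left _ _)
  set Kset : Set (ℝ × ℝ × ℝ) := Set.Icc 0 b ×ˢ Set.Icc 0 b ×ˢ Set.Icc (-R) R with hKset
  have hKcomp : IsCompact Kset := (isCompact_Icc).prod ((isCompact_Icc).prod isCompact_Icc)
  have hKsub : Kset ⊆ Set.Icc 0 b ×ˢ Set.Icc 0 b ×ˢ (Set.univ : Set ℝ) := fun p hp =>
    ⟨hp.1, hp.2.1, trivial⟩
  have hHK : ContinuousOn (fun p : ℝ × ℝ × ℝ => H p.1 p.2.1 p.2.2) Kset := hH_cont.mono hKsub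
  obtain ⟨M1, hM1⟩ := hKcomp.exists_bound_of_continuousOn hHK
  set MH := max M1 0 with hMH
  have hMHnn : 0 ≤ MH := le_max_right _ _
  have hmemK : ∀ y ∈ Set.Icc 0 b, ∀ τ ∈ Set.Icc 0 b, (y, τ, w τ) ∈ Kset := by
    intro y hy τ hτ
    exact ⟨hy, hτ, abs_le.mp (hRb τ hτ)⟩
  have hHbound : ∀ y ∈ Set.Icc 0 b, ∀ τ ∈ Set.Icc 0 b, |H y τ (w τ)| ≤ MH := by
    intro y hy τ hτ
    exact le_trans (by simpa using hM1 (y, τ, w τ) (hmemK y hy τ hτ)) (le_max_left _ _)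
  have hfy_cont : ∀ y ∈ Set.Icc 0 b, ContinuousOn (fun τ => H y τ (w τ)) (Set.Icc 0 b) := by
    intro y hy
    apply hH_cont.comp (continuousOn_const.prodMk (continuousOn_id.prodMk hw))
    intro τ hτ
    exact ⟨hy, hτ, trivial⟩
  have huc := hKcomp.uniformContinuousOn_of_continuous hHK
  rw [Metric.uniformContinuousOn_iff] at huc
  intro y₀ hy₀
  rw [Metric.continuousWithinAt_iff]
  intro ε hε
  set C₁ : ℝ := (ψ b - ψ 0) ^ α / α with hC₁
  have hbb : b ∈ Set.Icc 0 b := ⟨hy₀.1.trans hy₀.2, le_refl b⟩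
  have h0b : (0:ℝ) ∈ Set.Icc 0 b := ⟨le_refl 0, hy₀.1.trans hy₀.2⟩
  have hψ0b : ψ 0 ≤ ψ b := (hψ_mono.le_iff_le h0b hbb).mpr (hy₀.1.trans hy₀.2)
  have hC₁nn : 0 ≤ C₁ := div_nonneg (Real.rpow_nonneg (by linarith) _) hα0.le
  set ε₁ : ℝ := ε / (2 * (C₁ + 1)) with hε₁
  have hε₁pos : 0 < ε₁ := div_pos hε (by linarith)
  obtain ⟨δ₁, hδ₁pos, hδ₁⟩ := huc ε₁ hε₁pos
  -- choice of r
  set r : ℝ := (ε * α / (8 * (MH + 1))) ^ (α⁻¹ : ℝ) with hr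
  have hrpos : 0 < r := Real.rpow_pos_of_pos (by positivity) _
  have hrα : r ^ α = ε * α / (8 * (MH + 1)) :=
    Real.rpow_inv_rpow (by positivity) (ne_of_gt hα0)
  have hrbound : 2 * MH * r ^ α / α < ε / 2 := by
    rw [hrα]
    have heq : 2 * MH * (ε * α / (8 * (MH + 1))) / α = ε * (MH / (4 * (MH + 1))) := by
      field_simp
      ring
    rw [heq]
    have hlt : MH / (4 * (MH + 1)) < 1 / 2 := by
      rw [div_lt_div_iff₀ (by linarith) (by norm_num)]
      linarith
    calc ε * (MH / (4 * (MH + 1))) < ε * (1 / 2) := mul_lt_mul_of_pos_left hlt hε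
      _ = ε / 2 := by ring
  -- continuity of ψ at y₀
  have hψw := hψ_cont y₀ hy₀
  rw [Metric.continuousWithinAt_iff] at hψw
  obtain ⟨δ₂, hδ₂pos, hδ₂⟩ := hψw r hrpos
  refine ⟨min δ₁ δ₂, lt_min hδ₁pos hδ₂pos, ?_⟩
  intro y hy hdy
  have hdy₁ : dist y y₀ < δ₁ := lt_of_lt_of_le hdy (min_le_left _ _)
  have hdy₂ : dist y y₀ < δ₂ := lt_of_lt_of_le hdy (min_le_right _ _)
  have hψyy₀ : |ψ y - ψ y₀| < r := by
    have := hδ₂ hy hdy₂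
    rwa [Real.dist_eq] at this
  -- the three integrals
  set A : ℝ := ∫ τ in (0:ℝ)..y, ψ' τ * (ψ y - ψ τ) ^ (α - 1) * H y τ (w τ) with hA
  set B : ℝ := ∫ τ in (0:ℝ)..y, ψ' τ * (ψ y - ψ τ) ^ (α - 1) * H y₀ τ (w τ) with hB
  set Cc : ℝ := ∫ τ in (0:ℝ)..y₀, ψ' τ * (ψ y₀ - ψ τ) ^ (α - 1) * H y₀ τ (w τ) with hCc
  -- |B - Cc| < ε/2
  have hBC : |B - Cc| < ε / 2 := by
    have hf0M : ∀ x ∈ Set.Icc 0 b, |H y₀ x (w x)| ≤ MH := fun x hx => hHbound y₀ hy₀ x hx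
    have hkey : |B - Cc| ≤ 2 * MH * |ψ y - ψ y₀| ^ α / α := by
      rcases le_total y y₀ with hle | hle
      · have h0 := frac_int_holder hψ_mono hψ_deriv hψ'_pos hα0 hα1.le hf0M
          (hfy_cont y₀ hy₀) hy.1 hle hy₀.2
        rw [hB, hCc, abs_sub_comm, abs_sub_comm (ψ y) (ψ y₀),
          abs_of_nonneg (sub_nonneg.mpr ((hψ_mono.le_iff_le hy hy₀).mpr hle))]
        exact h0
      · have h0 := frac_int_holder hψ_mono hψ_deriv hψ'_pos hα0 hα1.le hf0M
          (hfy_cont y₀ hy₀) hy₀.1 hle hy.2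
        rw [hB, hCc, abs_of_nonneg (sub_nonneg.mpr ((hψ_mono.le_iff_le hy₀ hy).mpr hle))]
        exact h0
    have h2 : 2 * MH * |ψ y - ψ y₀| ^ α / α ≤ 2 * MH * r ^ α / α := by
      apply div_le_div_of_nonneg_right _ hα0.le
      apply mul_le_mul_of_nonneg_left _ (by linarith)
      exact Real.rpow_le_rpow (abs_nonneg _) hψyy₀.le hα0.le
    linarith
  -- |A - B| ≤ ε/2
  have hIy : IntervalIntegrable (fun τ => ψ' τ * (ψ y - ψ τ) ^ (α - 1) * H y τ (w τ))
      volume 0 y := kernel1_integrable hψ_mono hψ_deriv hψ'_pos hα0 (le_refl 0) hy.1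
      (le_refl y) hy.2 (hfy_cont y hy)
  have hI0 : IntervalIntegrable (fun τ => ψ' τ * (ψ y - ψ τ) ^ (α - 1) * H y₀ τ (w τ))
      volume 0 y := kernel1_integrable hψ_mono hψ_deriv hψ'_pos hα0 (le_refl 0) hy.1
      (le_refl y) hy.2 (hfy_cont y₀ hy₀)
  have hAB : |A - B| ≤ ε / 2 := by
    have hsub : A - B = ∫ τ in (0:ℝ)..y,
        (ψ' τ * (ψ y - ψ τ) ^ (α - 1) * H y τ (w τ) -
         ψ' τ * (ψ y - ψ τ) ^ (α - 1) * H y₀ τ (w τ)) := by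
      rw [hA, hB, intervalIntegral.integral_sub hIy hI0]
    have habs : |A - B| ≤ ∫ τ in (0:ℝ)..y,
        |ψ' τ * (ψ y - ψ τ) ^ (α - 1) * H y τ (w τ) -
         ψ' τ * (ψ y - ψ τ) ^ (α - 1) * H y₀ τ (w τ)| := by
      rw [hsub]
      exact intervalIntegral.abs_integral_le_integral_abs hy.1
    have hmono : (∫ τ in (0:ℝ)..y,
        |ψ' τ * (ψ y - ψ τ) ^ (α - 1) * H y τ (w τ) -
         ψ' τ * (ψ y - ψ τ) ^ (α - 1) * H y₀ τ (w τ)|) ≤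
        ∫ τ in (0:ℝ)..y, ψ' τ * (ψ y - ψ τ) ^ (α - 1) * ε₁ := by
      apply intervalIntegral.integral_mono_on hy.1 (hIy.sub hI0).abs
        (kernel1_integrable hψ_mono hψ_deriv hψ'_pos hα0 (le_refl 0) hy.1 (le_refl y) hy.2
          (f := fun _ => ε₁) continuousOn_const)
      intro τ hτ
      have hτb : τ ∈ Set.Icc 0 b := ⟨hτ.1, hτ.2.trans hy.2⟩
      have hψ'τ : 0 < ψ' τ := hψ'_pos τ hτb
      have hXnn : (0:ℝ) ≤ (ψ y - ψ τ) ^ (α - 1) :=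
        Real.rpow_nonneg (sub_nonneg.mpr ((hψ_mono.le_iff_le hτb hy).mpr hτ.2)) _
      have hdH : |H y τ (w τ) - H y₀ τ (w τ)| ≤ ε₁ := by
        have hp : (y, τ, w τ) ∈ Kset := hmemK y hy τ hτb
        have hq : (y₀, τ, w τ) ∈ Kset := hmemK y₀ hy₀ τ hτb
        have hdist : dist ((y, τ, w τ) : ℝ × ℝ × ℝ) (y₀, τ, w τ) < δ₁ := by
          rw [Prod.dist_eq, Prod.dist_eq]
          simp only [dist_self]
          calc max (dist y y₀) (max 0 0) = max (dist y y₀) 0 := by norm_num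
            _ = dist y y₀ := max_eq_left dist_nonneg
            _ < δ₁ := hdy₁
        have := hδ₁ _ hp _ hq hdist
        rw [Real.dist_eq] at this
        exact this.le
      have hrw : ψ' τ * (ψ y - ψ τ) ^ (α - 1) * H y τ (w τ) -
          ψ' τ * (ψ y - ψ τ) ^ (α - 1) * H y₀ τ (w τ) =
          ψ' τ * (ψ y - ψ τ) ^ (α - 1) * (H y τ (w τ) - H y₀ τ (w τ)) := by ring
      rw [hrw, abs_mul, abs_mul, abs_of_pos hψ'τ, abs_of_nonneg hXnn]
      exact mul_le_mul_of_nonneg_left hdH (mul_nonneg hψ'τ.le hXnn)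
    have hval : (∫ τ in (0:ℝ)..y, ψ' τ * (ψ y - ψ τ) ^ (α - 1) * ε₁) ≤ ε / 2 := by
      rw [intervalIntegral.integral_mul_const,
        psi_kernel_integral hψ_mono hψ_deriv hψ'_pos hα0 (le_refl 0) hy.1 (le_refl y) hy.2,
        sub_self, Real.zero_rpow (ne_of_gt hα0), sub_zero]
      have h6 : (ψ y - ψ 0) ^ α ≤ (ψ b - ψ 0) ^ α := by
        apply Real.rpow_le_rpow (sub_nonneg.mpr ((hψ_mono.le_iff_le h0b hy).mpr hy.1))
          (by linarith [(hψ_mono.le_iff_le hy hbb).mpr hy.2]) hα0.le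
      have h7 : (ψ y - ψ 0) ^ α / α * ε₁ ≤ C₁ * ε₁ := by
        apply mul_le_mul_of_nonneg_right _ hε₁pos.le
        rw [hC₁]
        exact div_le_div_of_nonneg_right h6 hα0.le
      have h8 : C₁ * ε₁ ≤ ε / 2 := by
        rw [hε₁]
        have heq2 : C₁ * (ε / (2 * (C₁ + 1))) = (ε / 2) * (C₁ / (C₁ + 1)) := by
          field_simp
        rw [heq2]
        have hle1 : C₁ / (C₁ + 1) ≤ 1 := by
          rw [div_le_one (by linarith)]
          linarith
        calc (ε / 2) * (C₁ / (C₁ + 1)) ≤ (ε / 2) * 1 :=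
              mul_le_mul_of_nonneg_left hle1 (by linarith)
          _ = ε / 2 := mul_one _
      linarith
    linarith
  have hfinal : |A - Cc| < ε := by
    calc |A - Cc| = |(A - B) + (B - Cc)| := by ring_nf
      _ ≤ |A - B| + |B - Cc| := abs_add_le _ _
      _ < ε / 2 + ε / 2 := add_lt_add_of_le_of_lt hAB hBC
      _ = ε := by ring
  rw [Real.dist_eq]
  exact hfinal


/-- FTC for `v`. -/
lemma ftc_v {v v' : ℝ → ℝ} (hb : 0 < b)
    (hv_deriv : ∀ z ∈ Set.Icc 0 b, HasDerivWithinAt v (v' z) (Set.Icc 0 b) z)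
    (hv'_cont : ContinuousOn v' (Set.Icc 0 b))
    {z : ℝ} (hz0 : 0 ≤ z) (hzb : z ≤ b) :
    ∫ t in (0:ℝ)..z, v' t = v z - v 0 := by
  have hsub : Set.Icc 0 z ⊆ Set.Icc 0 b := Set.Icc_subset_Icc (le_refl 0) hzb
  apply intervalIntegral.integral_eq_sub_of_hasDeriv_right_of_le hz0
  · exact fun x hx => ((hv_deriv x (hsub hx)).continuousWithinAt).mono hsub
  · intro x hx
    have hxb : x ∈ Set.Icc 0 b := ⟨hx.1.le, hx.2.le.trans hzb⟩
    have hmem : Set.Icc 0 b ∈ nhds x :=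
      mem_nhds_iff.mpr ⟨Set.Ioo 0 b, Set.Ioo_subset_Icc_self, isOpen_Ioo,
        ⟨hx.1, hx.2.trans_le hzb⟩⟩
    exact ((hv_deriv x hxb).hasDerivAt hmem).hasDerivWithinAt
  · exact (hv'_cont.mono (by rw [Set.uIcc_of_le hz0]; exact hsub)).intervalIntegrable

/-- If `∫₀ᶻ ψ' d = 0` for all `z` and `d` is continuous then `d = 0`. -/
lemma eq_zero_of_psi_integral (hb : 0 < b)
    (hψ'_cont : ContinuousOn ψ' (Set.Icc 0 b))
    (hψ'_pos : ∀ z ∈ Set.Icc 0 b, 0 < ψ' z)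
    {d : ℝ → ℝ} (hd : ContinuousOn d (Set.Icc 0 b))
    (h0 : ∀ z ∈ Set.Icc 0 b, ∫ t in (0:ℝ)..z, ψ' t * d t = 0) :
    ∀ z ∈ Set.Icc 0 b, d z = 0 := by
  intro z₀ hz₀
  by_contra hne
  set q : ℝ → ℝ := fun t => ψ' t * d t with hq
  have hqcont : ContinuousOn q (Set.Icc 0 b) := hψ'_cont.mul hd
  have hqne : q z₀ ≠ 0 := mul_ne_zero (ne_of_gt (hψ'_pos z₀ hz₀)) hne
  have hq2 : 0 < |q z₀| / 2 := by positivity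
  have hcw := hqcont z₀ hz₀
  rw [Metric.continuousWithinAt_iff] at hcw
  obtain ⟨δ, hδpos, hδ⟩ := hcw (|q z₀| / 2) hq2
  -- construct the subinterval
  set s := max 0 (z₀ - δ / 2) with hs
  set t := min b (z₀ + δ / 2) with ht
  have hs0 : 0 ≤ s := le_max_left _ _
  have hsz : s ≤ z₀ := max_le hz₀.1 (by linarith)
  have hzt : z₀ ≤ t := le_min hz₀.2 (by linarith)
  have htb : t ≤ b := min_le_left _ _
  have hst : s < t := by
    rcases lt_or_eq_of_le hz₀.2 with h | h
    · have : z₀ < t := lt_min h (by linarith)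
      linarith
    · have h1 : s < z₀ := by
        rw [hs]
        apply max_lt (by linarith) (by linarith)
      linarith
  have hclose : ∀ u ∈ Set.Icc s t, |q u - q z₀| < |q z₀| / 2 := by
    intro u hu
    have hub : u ∈ Set.Icc 0 b := ⟨hs0.trans hu.1, hu.2.trans htb⟩
    apply hδ hub
    rw [Real.dist_eq]
    have h1 : u - z₀ ≤ δ / 2 := by
      have := hu.2
      rw [ht] at this
      have := le_min_iff.mp this
      linarith [this.2]
    have h2 : z₀ - u ≤ δ / 2 := by
      have h3 : z₀ - δ / 2 ≤ s := le_max_right 0 (z₀ - δ / 2)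
      linarith [hu.1]
    rw [abs_sub_lt_iff]
    constructor <;> linarith
  have hqint : IntervalIntegrable q volume s t :=
    (hqcont.mono (by rw [Set.uIcc_of_le hst.le]; exact fun u hu => ⟨hs0.trans hu.1, hu.2.trans htb⟩)).intervalIntegrable
  have hint0 : ∫ u in s..t, q u = 0 := by
    have h0s := h0 s ⟨hs0, hsz.trans (hzt.trans htb)⟩
    have h0t := h0 t ⟨hs0.trans (hsz.trans hzt), htb⟩
    have hqint1 : IntervalIntegrable q volume 0 s :=
      (hqcont.mono (by rw [Set.uIcc_of_le hs0]; exact Set.Icc_subset_Icc (le_refl 0) (hsz.trans (hzt.trans htb)))).intervalIntegrable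
    have hqint2 : IntervalIntegrable q volume 0 t :=
      (hqcont.mono (by rw [Set.uIcc_of_le (hs0.trans hst.le)]; exact Set.Icc_subset_Icc (le_refl 0) htb)).intervalIntegrable
    have h0s' : ∫ u in (0:ℝ)..s, q u = 0 := h0s
    have h0t' : ∫ u in (0:ℝ)..t, q u = 0 := h0t
    have hadd := intervalIntegral.integral_add_adjacent_intervals hqint1 hqint
    linarith [hadd, h0s', h0t']
  rcases lt_or_gt_of_ne hqne with hneg | hpos
  · -- q z₀ < 0 : q u < q z₀ / 2 < 0 on [s,t]
    have hub : ∀ u ∈ Set.Icc s t, q u ≤ q z₀ / 2 := by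
      intro u hu
      have := hclose u hu
      rw [abs_of_neg hneg] at this
      have := abs_sub_lt_iff.mp this
      linarith [this.1]
    have hle : ∫ u in s..t, q u ≤ ∫ u in s..t, q z₀ / 2 :=
      intervalIntegral.integral_mono_on hst.le hqint intervalIntegrable_const hub
    rw [hint0, intervalIntegral.integral_const, smul_eq_mul] at hle
    nlinarith [hle, hst]
  · have hub : ∀ u ∈ Set.Icc s t, q z₀ / 2 ≤ q u := by
      intro u hu
      have := hclose u hu
      rw [abs_of_pos hpos] at this
      have := abs_sub_lt_iff.mp this
      linarith [this.2]
    have hle : ∫ u in s..t, q z₀ / 2 ≤ ∫ u in s..t, q u :=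
      intervalIntegral.integral_mono_on hst.le intervalIntegrable_const hqint hub
    rw [hint0, intervalIntegral.integral_const, smul_eq_mul] at hle
    nlinarith [hle, hst]



/-- Fundamental identity: `I^{α,ψ}(N^{α,ψ} v)(z) = v z - v 0`. -/
lemma fund_identity (hb : 0 < b)
    (hψ_mono : StrictMonoOn ψ (Set.Icc 0 b))
    (hψ_deriv : ∀ z ∈ Set.Icc 0 b, HasDerivWithinAt ψ (ψ' z) (Set.Icc 0 b) z)
    (hψ'_cont : ContinuousOn ψ' (Set.Icc 0 b))
    (hψ'_pos : ∀ z ∈ Set.Icc 0 b, 0 < ψ' z)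
    {α : ℝ} (hα0 : 0 < α) (hα1 : α < 1) {v v' : ℝ → ℝ}
    (hv_deriv : ∀ z ∈ Set.Icc 0 b, HasDerivWithinAt v (v' z) (Set.Icc 0 b) z)
    (hv'_cont : ContinuousOn v' (Set.Icc 0 b))
    {z : ℝ} (hz : z ∈ Set.Icc 0 b) :
    psiInt α ψ ψ' (psiCaputo α ψ ψ' v') z = v z - v 0 := by
  have hΓα : 0 < Real.Gamma α := Real.Gamma_pos_of_pos hα0
  have hΓα' : 0 < Real.Gamma (1 - α) := Real.Gamma_pos_of_pos (by linarith)
  have hcont : ContinuousOn (fun τ => v' τ / ψ' τ) (Set.Icc 0 b) :=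
    hv'_cont.div hψ'_cont (fun x hx => ne_of_gt (hψ'_pos x hx))
  have hfub := fubini_psi_kernel hψ_mono hψ_deriv hψ'_cont hψ'_pos hα0 hα1 hcont hz.1 hz.2
  rw [psiInt]
  have hstep1 : (∫ κ in (0:ℝ)..z, ψ' κ * (ψ z - ψ κ) ^ (α - 1) * psiCaputo α ψ ψ' v' κ) =
      (1 / Real.Gamma (1 - α)) * ∫ κ in (0:ℝ)..z, (ψ' κ * (ψ z - ψ κ) ^ (α - 1)) *
        (∫ τ in (0:ℝ)..κ, ψ' τ * (ψ κ - ψ τ) ^ (-α) * (v' τ / ψ' τ)) := by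
    rw [← intervalIntegral.integral_const_mul]
    apply intervalIntegral.integral_congr
    intro κ _
    simp only [psiCaputo]
    ring
  have hstep3 : (∫ τ in (0:ℝ)..z, ψ' τ * (v' τ / ψ' τ)) = ∫ τ in (0:ℝ)..z, v' τ := by
    apply intervalIntegral.integral_congr
    intro τ hτ
    rw [Set.uIcc_of_le hz.1] at hτ
    have hτb : τ ∈ Set.Icc 0 b := ⟨hτ.1, hτ.2.trans hz.2⟩
    field_simp [ne_of_gt (hψ'_pos τ hτb)]
  rw [hstep1, hfub, hstep3, ftc_v hb hv_deriv hv'_cont hz.1 hz.2]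
  field_simp

/-- Injectivity of the ψ-fractional integral on continuous functions. -/
lemma frac_int_inj (hb : 0 < b)
    (hψ_mono : StrictMonoOn ψ (Set.Icc 0 b))
    (hψ_deriv : ∀ z ∈ Set.Icc 0 b, HasDerivWithinAt ψ (ψ' z) (Set.Icc 0 b) z)
    (hψ'_cont : ContinuousOn ψ' (Set.Icc 0 b))
    (hψ'_pos : ∀ z ∈ Set.Icc 0 b, 0 < ψ' z)
    {α : ℝ} (hα0 : 0 < α) (hα1 : α < 1) {p q : ℝ → ℝ}
    (hp : ContinuousOn p (Set.Icc 0 b)) (hq : ContinuousOn q (Set.Icc 0 b))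
    (heq : ∀ z ∈ Set.Icc 0 b, (∫ κ in (0:ℝ)..z, ψ' κ * (ψ z - ψ κ) ^ (α - 1) * p κ) =
      ∫ κ in (0:ℝ)..z, ψ' κ * (ψ z - ψ κ) ^ (α - 1) * q κ) :
    ∀ z ∈ Set.Icc 0 b, p z = q z := by
  have hdcont : ContinuousOn (fun t => p t - q t) (Set.Icc 0 b) := hp.sub hq
  have hzero : ∀ Z ∈ Set.Icc 0 b,
      (∫ κ in (0:ℝ)..Z, ψ' κ * (ψ Z - ψ κ) ^ (α - 1) * (p κ - q κ)) = 0 := by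
    intro Z hZ
    have h1 : (∫ κ in (0:ℝ)..Z, ψ' κ * (ψ Z - ψ κ) ^ (α - 1) * (p κ - q κ)) =
        (∫ κ in (0:ℝ)..Z, ψ' κ * (ψ Z - ψ κ) ^ (α - 1) * p κ) -
        ∫ κ in (0:ℝ)..Z, ψ' κ * (ψ Z - ψ κ) ^ (α - 1) * q κ := by
      rw [← intervalIntegral.integral_sub
        (kernel1_integrable hψ_mono hψ_deriv hψ'_pos hα0 (le_refl 0) hZ.1 (le_refl Z) hZ.2 hp)
        (kernel1_integrable hψ_mono hψ_deriv hψ'_pos hα0 (le_refl 0) hZ.1 (le_refl Z) hZ.2 hq)]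
      apply intervalIntegral.integral_congr
      intro κ _
      dsimp only
      ring
    rw [h1, heq Z hZ, sub_self]
  have hzero2 : ∀ z ∈ Set.Icc 0 b, (∫ t in (0:ℝ)..z, ψ' t * (p t - q t)) = 0 := by
    intro z hz
    have hfub := fubini_psi_kernel hψ_mono hψ_deriv hψ'_cont hψ'_pos (α := 1 - α)
      (by linarith) (by linarith) hdcont hz.1 hz.2
    simp only [show (1:ℝ) - α - 1 = -α by ring, show -((1:ℝ) - α) = α - 1 by ring,
      show (1:ℝ) - (1 - α) = α by ring] at hfub
    have hL : (∫ κ in (0:ℝ)..z, (ψ' κ * (ψ z - ψ κ) ^ (-α)) *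
        (∫ τ in (0:ℝ)..κ, ψ' τ * (ψ κ - ψ τ) ^ (α - 1) * (p τ - q τ))) = 0 := by
      have hcongr : ∀ κ ∈ Set.uIcc (0:ℝ) z, (ψ' κ * (ψ z - ψ κ) ^ (-α)) *
          (∫ τ in (0:ℝ)..κ, ψ' τ * (ψ κ - ψ τ) ^ (α - 1) * (p τ - q τ)) = 0 := by
        intro κ hκ
        rw [Set.uIcc_of_le hz.1] at hκ
        rw [hzero κ ⟨hκ.1, hκ.2.trans hz.2⟩, mul_zero]
      calc (∫ κ in (0:ℝ)..z, (ψ' κ * (ψ z - ψ κ) ^ (-α)) *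
          (∫ τ in (0:ℝ)..κ, ψ' τ * (ψ κ - ψ τ) ^ (α - 1) * (p τ - q τ)))
          = ∫ _κ in (0:ℝ)..z, (0:ℝ) := intervalIntegral.integral_congr hcongr
        _ = 0 := by simp
    rw [hL] at hfub
    have hΓ : Real.Gamma (1 - α) * Real.Gamma α ≠ 0 :=
      ne_of_gt (mul_pos (Real.Gamma_pos_of_pos (by linarith)) (Real.Gamma_pos_of_pos hα0))
    exact ((mul_eq_zero.mp hfub.symm).resolve_left hΓ)
  have hzz := eq_zero_of_psi_integral hb hψ'_cont hψ'_pos hdcont hzero2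
  intro z hz
  have := hzz z hz
  linarith [this]

end FracAux


/-- Equivalence between the ψ-Caputo fractional integro-differential problem
`N^{α,ψ} v (z) = F(z, v(z), I^{α,ψ} H(z, ·, N^{α,ψ} v(·))(z))`, `v(0) = v₀`,
and the corresponding fractional integral equation. -/
theorem caputo_problem_iff_integral_eq (α b : ℝ) (hα0 : 0 < α) (hα1 : α < 1) (hb : 0 < b)
    (ψ ψ' : ℝ → ℝ)
    (hψ_mono : StrictMonoOn ψ (Set.Icc 0 b))
    (hψ_deriv : ∀ z ∈ Set.Icc 0 b, HasDerivWithinAt ψ (ψ' z) (Set.Icc 0 b) z)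
    (hψ'_cont : ContinuousOn ψ' (Set.Icc 0 b))
    (hψ'_pos : ∀ z ∈ Set.Icc 0 b, 0 < ψ' z)
    (F : ℝ → ℝ → ℝ → ℝ) (H : ℝ → ℝ → ℝ → ℝ)
    (hF_cont : ContinuousOn (fun p : ℝ × ℝ × ℝ => F p.1 p.2.1 p.2.2)
      (Set.Icc 0 b ×ˢ (Set.univ : Set ℝ) ×ˢ (Set.univ : Set ℝ)))
    (hH_cont : ContinuousOn (fun p : ℝ × ℝ × ℝ => H p.1 p.2.1 p.2.2)
      (Set.Icc 0 b ×ˢ Set.Icc 0 b ×ˢ (Set.univ : Set ℝ)))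
    (v₀ : ℝ) (v v' : ℝ → ℝ)
    (hv_deriv : ∀ z ∈ Set.Icc 0 b, HasDerivWithinAt v (v' z) (Set.Icc 0 b) z)
    (hv'_cont : ContinuousOn v' (Set.Icc 0 b)) :
    ((∀ z ∈ Set.Icc 0 b,
        psiCaputo α ψ ψ' v' z =
          F z (v z) (psiInt α ψ ψ' (fun τ => H z τ (psiCaputo α ψ ψ' v' τ)) z)) ∧
      v 0 = v₀) ↔
    (∀ z ∈ Set.Icc 0 b,
        v z = v₀ + psiInt α ψ ψ'
          (fun κ => F κ (v κ) (psiInt α ψ ψ' (fun τ => H κ τ (psiCaputo α ψ ψ' v' τ)) κ)) z) := by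
  have hb0 : (0:ℝ) ≤ b := hb.le
  have h0mem : (0:ℝ) ∈ Set.Icc 0 b := ⟨le_refl 0, hb0⟩
  have hΓα : 0 < Real.Gamma α := Real.Gamma_pos_of_pos hα0
  have hv_cont : ContinuousOn v (Set.Icc 0 b) := fun x hx => (hv_deriv x hx).continuousWithinAt
  -- continuity of the ψ-Caputo derivative
  have hw_cont : ContinuousOn (psiCaputo α ψ ψ' v') (Set.Icc 0 b) := by
    have hcont' : ContinuousOn (fun τ => v' τ / ψ' τ) (Set.Icc 0 b) :=
      hv'_cont.div hψ'_cont (fun x hx => ne_of_gt (hψ'_pos x hx))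
    have hJ := frac_int_continuousOn hψ_mono hψ_deriv hψ'_pos (β := 1 - α)
      (by linarith) (by linarith) hcont'
    have heqfun : psiCaputo α ψ ψ' v' = fun z => (1 / Real.Gamma (1 - α)) *
        ∫ τ in (0:ℝ)..z, ψ' τ * (ψ z - ψ τ) ^ ((1 - α) - 1) * (v' τ / ψ' τ) := by
      funext z
      simp only [psiCaputo, show ((1:ℝ) - α) - 1 = -α by ring]
    rw [heqfun]
    exact continuousOn_const.mul hJ
  -- continuity of the parametric fractional integral
  have hX_cont : ContinuousOn
      (fun κ => psiInt α ψ ψ' (fun τ => H κ τ (psiCaputo α ψ ψ' v' τ)) κ) (Set.Icc 0 b) := by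
    have hJ := frac_int_param_continuousOn hψ_mono hψ_deriv hψ'_pos hα0 hα1 hw_cont hH_cont
    have heqfun : (fun κ => psiInt α ψ ψ' (fun τ => H κ τ (psiCaputo α ψ ψ' v' τ)) κ) =
        fun y => (1 / Real.Gamma α) *
          ∫ τ in (0:ℝ)..y, ψ' τ * (ψ y - ψ τ) ^ (α - 1) * H y τ (psiCaputo α ψ ψ' v' τ) := by
      funext y
      simp only [psiInt]
    rw [heqfun]
    exact continuousOn_const.mul hJ
  have hg_cont : ContinuousOn
      (fun κ => F κ (v κ) (psiInt α ψ ψ' (fun τ => H κ τ (psiCaputo α ψ ψ' v' τ)) κ))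
      (Set.Icc 0 b) := by
    apply hF_cont.comp (continuousOn_id.prodMk (hv_cont.prodMk hX_cont))
    intro κ hκ
    exact ⟨hκ, trivial, trivial⟩
  constructor
  · rintro ⟨hmain, hv0⟩ z hz
    have hIeq : psiInt α ψ ψ'
        (fun κ => F κ (v κ) (psiInt α ψ ψ' (fun τ => H κ τ (psiCaputo α ψ ψ' v' τ)) κ)) z =
        psiInt α ψ ψ' (psiCaputo α ψ ψ' v') z := by
      simp only [psiInt]
      congr 1
      apply intervalIntegral.integral_congr
      intro κ hκ
      rw [Set.uIcc_of_le hz.1] at hκ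
      have hκb : κ ∈ Set.Icc 0 b := ⟨hκ.1, hκ.2.trans hz.2⟩
      have := hmain κ hκb
      simp only [psiInt] at this ⊢
      rw [← this]
    rw [hIeq, fund_identity hb hψ_mono hψ_deriv hψ'_cont hψ'_pos hα0 hα1 hv_deriv hv'_cont hz,
      hv0]
    ring
  · intro hIE
    have hv0 : v 0 = v₀ := by
      have h00 := hIE 0 h0mem
      simp only [psiInt, intervalIntegral.integral_same, mul_zero] at h00
      linarith
    refine ⟨?_, hv0⟩
    have heq : ∀ z ∈ Set.Icc 0 b,
        (∫ κ in (0:ℝ)..z, ψ' κ * (ψ z - ψ κ) ^ (α - 1) * psiCaputo α ψ ψ' v' κ) =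
        ∫ κ in (0:ℝ)..z, ψ' κ * (ψ z - ψ κ) ^ (α - 1) *
          F κ (v κ) (psiInt α ψ ψ' (fun τ => H κ τ (psiCaputo α ψ ψ' v' τ)) κ) := by
      intro z hz
      have hI1 : psiInt α ψ ψ' (psiCaputo α ψ ψ' v') z = v z - v 0 :=
        fund_identity hb hψ_mono hψ_deriv hψ'_cont hψ'_pos hα0 hα1 hv_deriv hv'_cont hz
      have hI2 := hIE z hz
      rw [psiInt] at hI1
      rw [psiInt] at hI2
      have hmul : (1 / Real.Gamma α) *
          (∫ κ in (0:ℝ)..z, ψ' κ * (ψ z - ψ κ) ^ (α - 1) * psiCaputo α ψ ψ' v' κ) =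
          (1 / Real.Gamma α) *
          ∫ κ in (0:ℝ)..z, ψ' κ * (ψ z - ψ κ) ^ (α - 1) *
            F κ (v κ) (psiInt α ψ ψ' (fun τ => H κ τ (psiCaputo α ψ ψ' v' τ)) κ) := by
        rw [hI1, hv0]
        linarith
      have hΓne : (1 / Real.Gamma α) ≠ 0 := by positivity
      exact mul_left_cancel₀ hΓne hmul
    exact frac_int_inj hb hψ_mono hψ_deriv hψ'_cont hψ'_pos hα0 hα1 hw_cont hg_cont heq
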